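/- Let (X,·) be a finite cycle set and φ an automorphism of (X,·) of order m with gcd(m, |𝒢(X,·)|) = 1 such that φ has a fixed point. Consider the deformed cycle set (X,·_φ) with x ·_φ y = φ(x·y), whose σ-maps are σ′_x = φ∘σ_x. Then, as subgroups of Sym(X): the subgroup generated by {σ′_x : x ∈ X} equals the subgroup generated by 𝒢(X,·) ∪ {φ}; 𝒢(X,·) is a normal subgroup of it; and 𝒢(X,·) ∩ ⟨φ⟩ = {id} (so 𝒢(X,·_φ) = 𝒢(X,·) ⋊ ⟨φ⟩). Moreover, if (X,·) is indecomposable then so is (X,·_φ). -/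

import Mathlib

/-- A (non-degenerate) cycle set: a set with a binary operation satisfying
(C1) `(x·y)·(x·z) = (y·x)·(y·z)`, (C2) each left translation is bijective and
(C3) the square map `x ↦ x·x` is bijective. -/
structure CycleSet (X : Type*) where
  op : X → X → X
  c1 : ∀ x y z : X, op (op x y) (op x z) = op (op y x) (op y z)
  c2 : ∀ x : X, Function.Bijective (op x)
  c3 : Function.Bijective (fun x : X => op x x)

namespace CycleSet

variable {X Y : Type*}

/-- The permutation `σ_x : y ↦ x·y`. -/
noncomputable def sigma (C : CycleSet X) (x : X) : Equiv.Perm X :=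
  Equiv.ofBijective (C.op x) (C.c2 x)

/-- The permutation group `𝒢(X)` generated by all `σ_x`. -/
noncomputable def permGroup (C : CycleSet X) : Subgroup (Equiv.Perm X) :=
  Subgroup.closure (Set.range C.sigma)

/-- A cycle set is indecomposable if `𝒢(X)` acts transitively on `X`. -/
def Indecomposable (C : CycleSet X) : Prop :=
  ∀ x y : X, ∃ g ∈ C.permGroup, g x = y

/-- A cycle set is irretractable if `σ_x = σ_y` implies `x = y`. -/
def Irretractable (C : CycleSet X) : Prop :=
  ∀ x y : X, C.op x = C.op y → x = y

/-- `f` is an isomorphism of cycle sets from `C` to `D`. -/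
def IsIso (C : CycleSet X) (D : CycleSet Y) (f : X → Y) : Prop :=
  Function.Bijective f ∧ ∀ x y : X, f (C.op x y) = D.op (f x) (f y)

/-- Two cycle sets are isomorphic if there is an isomorphism between them. -/
def Iso (C : CycleSet X) (D : CycleSet Y) : Prop :=
  ∃ f : X → Y, C.IsIso D f

end CycleSet

theorem stmt15 {X : Type*} [Finite X] (C : CycleSet X) (φ : Equiv.Perm X)
    (hhom : ∀ x y : X, φ (C.op x y) = C.op (φ x) (φ y))
    (m : ℕ) (hm : orderOf φ = m)
    (hgcd : Nat.gcd m (Nat.card C.permGroup) = 1)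
    (hfix : ∃ x : X, φ x = x)
    (D : CycleSet X) (hD : ∀ x y : X, D.op x y = φ (C.op x y)) :
    D.permGroup = Subgroup.closure ((C.permGroup : Set (Equiv.Perm X)) ∪ {φ}) ∧
    C.permGroup ≤ D.permGroup ∧
    (∀ g ∈ D.permGroup, ∀ h ∈ C.permGroup, g * h * g⁻¹ ∈ C.permGroup) ∧
    C.permGroup ⊓ Subgroup.zpowers φ = ⊥ ∧
    (C.Indecomposable → D.Indecomposable) := by

  classical
  obtain ⟨x₀, hx₀⟩ := hfix
  -- conjugation of sigma by φ
  have hconj : ∀ x : X, φ * C.sigma x * φ⁻¹ = C.sigma (φ x) := by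
    intro x
    ext y
    simp [CycleSet.sigma, Equiv.Perm.mul_apply, hhom]
  have hDsig : ∀ x : X, D.sigma x = φ * C.sigma x := by
    intro x
    ext y
    simp [CycleSet.sigma, Equiv.Perm.mul_apply, hD]
  -- conjugation by φ fixes permGroup
  have hmap : C.permGroup.map (MulAut.conj φ).toMonoidHom = C.permGroup := by
    rw [CycleSet.permGroup, MonoidHom.map_closure]
    congr 1
    ext g
    constructor
    · rintro ⟨-, ⟨x, rfl⟩, rfl⟩
      exact ⟨φ x, (hconj x).symm⟩
    · rintro ⟨x, rfl⟩
      refine ⟨C.sigma (φ⁻¹ x), ⟨φ⁻¹ x, rfl⟩, ?_⟩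
      have := hconj (φ⁻¹ x)
      simpa using this
  have conj_mem : ∀ g ∈ C.permGroup, φ * g * φ⁻¹ ∈ C.permGroup := by
    intro g hg
    have h1 : (MulAut.conj φ).toMonoidHom g ∈ C.permGroup.map (MulAut.conj φ).toMonoidHom :=
      Subgroup.mem_map_of_mem _ hg
    rw [hmap] at h1
    simpa [MulAut.conj] using h1
  have conj_mem' : ∀ g ∈ C.permGroup, φ⁻¹ * g * φ ∈ C.permGroup := by
    intro g hg
    rw [← hmap, Subgroup.mem_map_equiv] at hg
    simpa [MulAut.conj] using hg
  have mem_conj : ∀ g : Equiv.Perm X, φ * g * φ⁻¹ ∈ C.permGroup ↔ g ∈ C.permGroup := by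
    intro g
    constructor
    · intro hg
      have h2 := conj_mem' _ hg
      have e : φ⁻¹ * (φ * g * φ⁻¹) * φ = g := by group
      rwa [e] at h2
    · exact conj_mem g
  -- φ commutes with σ_{x₀}
  have hcomm : Commute φ (C.sigma x₀) := by
    have h := hconj x₀
    rw [hx₀, mul_inv_eq_iff_eq_mul] at h
    exact h
  have hσ₀mem : C.sigma x₀ ∈ C.permGroup :=
    Subgroup.subset_closure ⟨x₀, rfl⟩
  have hcard_pos : 0 < Nat.card C.permGroup := Nat.card_pos
  -- order of σ₀ divides card of permGroup
  have horder_dvd : ∀ g : Equiv.Perm X, g ∈ C.permGroup → orderOf g ∣ Nat.card C.permGroup := by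
    intro g hg
    have h := orderOf_injective C.permGroup.subtype C.permGroup.subtype_injective ⟨g, hg⟩
    calc orderOf g = orderOf (⟨g, hg⟩ : C.permGroup) := h
      _ ∣ Nat.card C.permGroup := orderOf_dvd_natCard _
  set r := orderOf (C.sigma x₀) with hr
  have hrd : r ∣ Nat.card C.permGroup := horder_dvd _ hσ₀mem
  have hmpos : 0 < m := hm ▸ orderOf_pos φ
  have hcop : Nat.Coprime m r := Nat.Coprime.coprime_dvd_right hrd hgcd
  obtain ⟨k, hk1, hk2⟩ := Nat.chineseRemainder hcop 1 0
  have hφpow : φ ^ (k : ℕ) = φ := by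
    have : φ ^ (k : ℕ) = φ ^ 1 := by
      rw [pow_eq_pow_iff_modEq, hm]
      exact hk1
    simpa using this
  have hσpow : (C.sigma x₀) ^ (k : ℕ) = 1 := by
    apply orderOf_dvd_iff_pow_eq_one.mp
    rw [← hr]
    exact (Nat.modEq_zero_iff_dvd).mp hk2
  have hφH : φ ∈ D.permGroup := by
    have hmem : D.sigma x₀ ∈ D.permGroup := Subgroup.subset_closure ⟨x₀, rfl⟩
    have : (D.sigma x₀) ^ (k : ℕ) = φ := by
      rw [hDsig, hcomm.mul_pow, hφpow, hσpow, mul_one]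
    exact this ▸ pow_mem hmem _
  have hGH : C.permGroup ≤ D.permGroup := by
    rw [CycleSet.permGroup, Subgroup.closure_le]
    rintro g ⟨x, rfl⟩
    have hx : C.sigma x = φ⁻¹ * D.sigma x := by rw [hDsig]; group
    rw [hx]
    exact mul_mem (inv_mem hφH) (Subgroup.subset_closure ⟨x, rfl⟩)
  -- equality of groups
  have heq : D.permGroup = Subgroup.closure ((C.permGroup : Set (Equiv.Perm X)) ∪ {φ}) := by
    apply le_antisymm
    · rw [CycleSet.permGroup, Subgroup.closure_le]
      rintro g ⟨x, rfl⟩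
      rw [hDsig]
      exact mul_mem (Subgroup.subset_closure (Or.inr rfl))
        (Subgroup.subset_closure (Or.inl (Subgroup.subset_closure ⟨x, rfl⟩)))
    · rw [Subgroup.closure_le]
      rintro g (hg | hg)
      · exact hGH hg
      · rw [Set.mem_singleton_iff] at hg
        exact hg ▸ hφH
  -- normality
  have hnorm : D.permGroup ≤ Subgroup.normalizer (C.permGroup : Set (Equiv.Perm X)) := by
    rw [heq, Subgroup.closure_le]
    rintro g (hg | hg)
    · exact Subgroup.le_normalizer hg
    · rw [Set.mem_singleton_iff] at hg
      subst hg
      exact Subgroup.mem_normalizer_iff.mpr fun h => (mem_conj h).symm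
  refine ⟨heq, hGH, ?_, ?_, ?_⟩
  · intro g hg h hh
    exact (Subgroup.mem_normalizer_iff.mp (hnorm hg) h).mp hh
  · rw [Subgroup.eq_bot_iff_forall]
    intro g hg
    obtain ⟨hgG, hgφ⟩ := hg
    have h1 : orderOf g ∣ Nat.card C.permGroup := horder_dvd g hgG
    have h2 : orderOf g ∣ m := by
      have h := orderOf_injective (Subgroup.zpowers φ).subtype
        (Subgroup.zpowers φ).subtype_injective ⟨g, hgφ⟩
      calc orderOf g = orderOf (⟨g, hgφ⟩ : Subgroup.zpowers φ) := h
        _ ∣ Nat.card (Subgroup.zpowers φ) := orderOf_dvd_natCard _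
        _ = m := by rw [Nat.card_zpowers, hm]
    have : orderOf g ∣ 1 := hgcd ▸ Nat.dvd_gcd h2 h1
    exact orderOf_eq_one_iff.mp (Nat.dvd_one.mp this)
  · intro hI x y
    obtain ⟨g, hg, hgx⟩ := hI x y
    exact ⟨g, hGH hg, hgx⟩
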